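/- For all real r > 0, g₃₁(r) < 0, where g₃₁(r) = −343200r¹⁰ arctan r + 535040r⁹√(r²+1) − 1064880r⁸ arctan r − 343200r⁹ + 1400576r⁷√(r²+1) − 1214010r⁶ arctan r − 950480r⁷ + 1271712r⁵√(r²+1) − 607425r⁴ arctan r − 927690r⁵ + 461776r³√(r²+1) − 119700r² arctan r − 371091r³ + 54880r√(r²+1) − 4725 arctan r − 50155r. -/

import Mathlib

set_option linter.unreachableTactic false
set_option linter.unusedTactic false
set_option linter.deprecated false

lemma arctan_ge_poly7 (x : ℝ) (hx : 0 ≤ x) :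
    x - x^3/3 + x^5/5 - x^7/7 ≤ Real.arctan x := by
  have hmono : Monotone (fun z : ℝ => Real.arctan z - (z - z^3/3 + z^5/5 - z^7/7)) := by
    apply monotone_of_hasDerivAt_nonneg (f' := fun y : ℝ => y^8/(1+y^2))
    · intro y
      have h1 := Real.hasDerivAt_arctan y
      have h2 : HasDerivAt (fun z : ℝ => z - z^3/3 + z^5/5 - z^7/7)
          (1 - (3:ℕ)*y^2/3 + (5:ℕ)*y^4/5 - (7:ℕ)*y^6/7) y := by
        have h3 := (hasDerivAt_pow 3 y).div_const 3
        have h5 := (hasDerivAt_pow 5 y).div_const 5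
        have h7 := (hasDerivAt_pow 7 y).div_const 7
        have := (((hasDerivAt_id y).sub h3).add h5).sub h7
        exact this.congr_deriv (by norm_num)
      have h := h1.sub h2
      refine h.congr_deriv ?_
      have hy : (1:ℝ) + y^2 ≠ 0 := by positivity
      field_simp
      ring
    · intro y
      positivity
  have h := hmono hx
  simp only [Real.arctan_zero] at h
  norm_num at h
  linarith

lemma arctan_le_poly9 (x : ℝ) (hx : 0 ≤ x) :
    Real.arctan x ≤ x - x^3/3 + x^5/5 - x^7/7 + x^9/9 := by
  have hmono : Monotone (fun z : ℝ => (z - z^3/3 + z^5/5 - z^7/7 + z^9/9) - Real.arctan z) := by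
    apply monotone_of_hasDerivAt_nonneg (f' := fun y : ℝ => y^10/(1+y^2))
    · intro y
      have h1 := Real.hasDerivAt_arctan y
      have h2 : HasDerivAt (fun z : ℝ => z - z^3/3 + z^5/5 - z^7/7 + z^9/9)
          (1 - (3:ℕ)*y^2/3 + (5:ℕ)*y^4/5 - (7:ℕ)*y^6/7 + (9:ℕ)*y^8/9) y := by
        have h3 := (hasDerivAt_pow 3 y).div_const 3
        have h5 := (hasDerivAt_pow 5 y).div_const 5
        have h7 := (hasDerivAt_pow 7 y).div_const 7
        have h9 := (hasDerivAt_pow 9 y).div_const 9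
        have := ((((hasDerivAt_id y).sub h3).add h5).sub h7).add h9
        exact this.congr_deriv (by norm_num)
      have h := h2.sub h1
      refine h.congr_deriv ?_
      have hy : (1:ℝ) + y^2 ≠ 0 := by positivity
      field_simp
      ring
    · intro y
      positivity
  have h := hmono hx
  simp only [Real.arctan_zero] at h
  norm_num at h
  linarith

set_option maxHeartbeats 4000000 in
/-- For all real `r > 0`, `g₃₁(r) < 0`, where `g₃₁` arises in the
analysis of the Wronskian `W[f₁, …, f₇]` via
`(d/dr)(g₃′(r)√(r²+1)/r) = −g₃₁(r)/√(r²+1)`. -/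
theorem g31_neg (r : ℝ) (hr : 0 < r) :
    -343200 * r ^ 10 * Real.arctan r + 535040 * r ^ 9 * Real.sqrt (r ^ 2 + 1)
      - 1064880 * r ^ 8 * Real.arctan r - 343200 * r ^ 9
      + 1400576 * r ^ 7 * Real.sqrt (r ^ 2 + 1)
      - 1214010 * r ^ 6 * Real.arctan r - 950480 * r ^ 7
      + 1271712 * r ^ 5 * Real.sqrt (r ^ 2 + 1)
      - 607425 * r ^ 4 * Real.arctan r - 927690 * r ^ 5
      + 461776 * r ^ 3 * Real.sqrt (r ^ 2 + 1)
      - 119700 * r ^ 2 * Real.arctan r - 371091 * r ^ 3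
      + 54880 * r * Real.sqrt (r ^ 2 + 1)
      - 4725 * Real.arctan r - 50155 * r < 0 := by
  set s : ℝ := Real.sqrt (r ^ 2 + 1) with hs_def
  have hs2 : s ^ 2 = r ^ 2 + 1 := Real.sq_sqrt (by positivity)
  have hs_pos : 0 < s := Real.sqrt_pos.mpr (by positivity)
  have hs_gt1 : 1 < s := by nlinarith
  have hPa : (0:ℝ) < 4725 + 119700*r^2 + 607425*r^4 + 1214010*r^6 + 1064880*r^8 + 343200*r^10 := by
    positivity
  rcases le_or_gt r (7/5) with hcase | hcase
  · -- small case: 0 < r ≤ 7/5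
    set u : ℝ := r / (1 + s) with hu_def
    have h1s : (0:ℝ) < 1 + s := by linarith
    have hu_pos : 0 < u := div_pos hr h1s
    have hrs : r < s := by nlinarith
    have hu1 : (-1:ℝ) < u := by linarith
    have hu1' : u < 1 := (div_lt_one h1s).mpr (by linarith)
    have hu_lt : u < 7/10 := by
      rw [hu_def, div_lt_iff₀ h1s]; nlinarith
    have hru : u * (1 + s) = r := by
      rw [hu_def]; field_simp
    have h4 : (1 - u^2) * (1 + s)^2 = 2 * (1 + s) := by
      linear_combination hs2 - (u*(1+s) + r) * hru
    have h1mu : (1 - u^2) * (1 + s) = 2 :=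
      mul_right_cancel₀ (ne_of_gt h1s) (by linear_combination h4)
    have h1mu_pos : 0 < 1 - u^2 := by nlinarith
    have hone : (1:ℝ) - u^2 ≠ 0 := ne_of_gt h1mu_pos
    have hr_eq : r = 2 * u / (1 - u ^ 2) := by
      rw [eq_div_iff hone]; linear_combination u * h1mu - (1 - u^2) * hru
    have hs_eq : s = (1 + u ^ 2) / (1 - u ^ 2) := by
      rw [eq_div_iff hone]; linear_combination h1mu
    have hdouble : Real.arctan r = 2 * Real.arctan u := by
      rw [Real.two_mul_arctan hu1 hu1', ← hr_eq]
    have harct : 2*(u - u^3/3 + u^5/5 - u^7/7) ≤ Real.arctan r := by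
      rw [hdouble]
      have := arctan_ge_poly7 u hu_pos.le
      linarith
    have key : -(4725 + 119700*r^2 + 607425*r^4 + 1214010*r^6 + 1064880*r^8 + 343200*r^10)
          * (2*(u - u^3/3 + u^5/5 - u^7/7))
        + (54880*r + 461776*r^3 + 1271712*r^5 + 1400576*r^7 + 535040*r^9) * s
        - (50155*r + 371091*r^3 + 927690*r^5 + 950480*r^7 + 343200*r^9) < 0 := by
      have heq : -(4725 + 119700*r^2 + 607425*r^4 + 1214010*r^6 + 1064880*r^8 + 343200*r^10)
            * (2*(u - u^3/3 + u^5/5 - u^7/7))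
          + (54880*r + 461776*r^3 + 1271712*r^5 + 1400576*r^7 + 535040*r^9) * s
          - (50155*r + 371091*r^3 + 927690*r^5 + 950480*r^7 + 343200*r^9)
          = (141750*u^27 + 12748050*u^25 + 165236400*u^23 + 739670400*u^21
             + 1458652620*u^19 + 1374039540*u^17 + 655130880*u^15 + 105189840*u^13
             - 196113330*u^11 - 169032150*u^9 - 35145600*u^7 - 1411200*u^5)
            / (105 * (1 - u^2)^10) := by
        rw [hr_eq, hs_eq]
        field_simp
        ring
      rw [heq]
      apply div_neg_of_neg_of_pos
      · have hpow : ∀ k : ℕ, u^(11+k) ≤ (7/10)^k * u^11 := by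
          intro k
          have h1 : u^k ≤ (7/10)^k := pow_le_pow_left₀ hu_pos.le hu_lt.le k
          calc u^(11+k) = u^k * u^11 := by ring
            _ ≤ (7/10)^k * u^11 := by
                exact mul_le_mul_of_nonneg_right h1 (pow_nonneg hu_pos.le 11)
        have h13 := hpow 2
        have h15 := hpow 4
        have h17 := hpow 6
        have h19 := hpow 8
        have h21 := hpow 10
        have h23 := hpow 12
        have h25 := hpow 14
        have h27 := hpow 16
        norm_num at h13 h15 h17 h19 h21 h23 h25 h27
        have h11 : u^11 ≤ (49/100) * u^9 := by
          have h1 : u^2 ≤ (7/10)^2 := pow_le_pow_left₀ hu_pos.le hu_lt.le 2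
          nlinarith [pow_nonneg hu_pos.le 9]
        have hu5 : 0 < u^5 := pow_pos hu_pos 5
        have hu7 : 0 < u^7 := pow_pos hu_pos 7
        have hu9 : 0 < u^9 := pow_pos hu_pos 9
        linarith
      · positivity
    nlinarith [mul_le_mul_of_nonneg_left harct hPa.le]
  · -- large case: r > 7/5
    have hz : (0:ℝ) ≤ r - 7/5 := by linarith
    have hrne : r ≠ 0 := ne_of_gt hr
    have hinv_pos : (0:ℝ) ≤ r⁻¹ := by positivity
    have hpi := Real.pi_gt_d6
    have harct : (392699/250000 : ℝ)
        - (r⁻¹ - r⁻¹^3/3 + r⁻¹^5/5 - r⁻¹^7/7 + r⁻¹^9/9) ≤ Real.arctan r := by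
      have h1 := Real.arctan_inv_of_pos hr
      have h2 := arctan_le_poly9 r⁻¹ hinv_pos
      norm_num at hpi
      linarith
    have hA : (r^2+1) * (256*r^10) ≤ (16*r^6 + 8*r^4 - 2*r^2 + 1)^2 := by
      nlinarith [sq_nonneg (4*r^2 - 1), sq_nonneg r, pow_pos hr 2, pow_pos hr 4]
    have hRHS0 : (0:ℝ) ≤ 16*r^6 + 8*r^4 - 2*r^2 + 1 := by nlinarith [sq_nonneg (4*r^2-1)]
    have hsq : (16*r^5*s)^2 = (r^2+1)*(256*r^10) := by
      rw [mul_pow]; rw [hs2]; ring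
    have hs_up16 : 16*r^5*s ≤ 16*r^6 + 8*r^4 - 2*r^2 + 1 := by
      nlinarith [hA, hsq, mul_pos (mul_pos (by norm_num : (0:ℝ) < 16) (pow_pos hr 5)) hs_pos]
    have hsB : s ≤ (16*r^6 + 8*r^4 - 2*r^2 + 1) / (16*r^5) := by
      rw [le_div_iff₀ (by positivity)]
      nlinarith [hs_up16]
    have hP2 : 1653750000 + 39768750000*r^2 + 161710500000*r^4 + 10804500000*r^5
        + 222012000000*r^6 + 69303150000*r^7 + 98280000000*r^8 + 131600665035*r^9
        - 12979200000*r^10 + 82894514220*r^11 - 13824000000*r^12 + 5856605055*r^13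
        - 5802463674*r^15 - 14531720112*r^17 - 12780139680*r^19 < 0 := by
      nlinarith [pow_nonneg hz 2, pow_nonneg hz 3, pow_nonneg hz 4, pow_nonneg hz 5,
        pow_nonneg hz 6, pow_nonneg hz 7, pow_nonneg hz 8, pow_nonneg hz 9,
        pow_nonneg hz 10, pow_nonneg hz 11, pow_nonneg hz 12, pow_nonneg hz 13,
        pow_nonneg hz 14, pow_nonneg hz 15, pow_nonneg hz 16, pow_nonneg hz 17,
        pow_nonneg hz 18, pow_nonneg hz 19, hz]
    have heq2 : -(4725 + 119700*r^2 + 607425*r^4 + 1214010*r^6 + 1064880*r^8 + 343200*r^10)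
          * ((392699/250000 : ℝ) - (r⁻¹ - r⁻¹^3/3 + r⁻¹^5/5 - r⁻¹^7/7 + r⁻¹^9/9))
        + (54880*r + 461776*r^3 + 1271712*r^5 + 1400576*r^7 + 535040*r^9)
          * ((16*r^6 + 8*r^4 - 2*r^2 + 1) / (16*r^5))
        - (50155*r + 371091*r^3 + 927690*r^5 + 950480*r^7 + 343200*r^9)
        = (1653750000 + 39768750000*r^2 + 161710500000*r^4 + 10804500000*r^5
        + 222012000000*r^6 + 69303150000*r^7 + 98280000000*r^8 + 131600665035*r^9
        - 12979200000*r^10 + 82894514220*r^11 - 13824000000*r^12 + 5856605055*r^13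
        - 5802463674*r^15 - 14531720112*r^17 - 12780139680*r^19) / (3150000*r^9) := by
      field_simp
      ring
    have hneg : -(4725 + 119700*r^2 + 607425*r^4 + 1214010*r^6 + 1064880*r^8 + 343200*r^10)
          * ((392699/250000 : ℝ) - (r⁻¹ - r⁻¹^3/3 + r⁻¹^5/5 - r⁻¹^7/7 + r⁻¹^9/9))
        + (54880*r + 461776*r^3 + 1271712*r^5 + 1400576*r^7 + 535040*r^9)
          * ((16*r^6 + 8*r^4 - 2*r^2 + 1) / (16*r^5))
        - (50155*r + 371091*r^3 + 927690*r^5 + 950480*r^7 + 343200*r^9) < 0 := by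
      rw [heq2]
      exact div_neg_of_neg_of_pos hP2 (by positivity)
    have hPs : (0:ℝ) ≤ 54880*r + 461776*r^3 + 1271712*r^5 + 1400576*r^7 + 535040*r^9 := by
      positivity
    have hm1 := mul_le_mul_of_nonneg_left harct hPa.le
    have hm2 := mul_le_mul_of_nonneg_left hsB hPs
    nlinarith [hm1, hm2, hneg]
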